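/- In the same geometric setting (null hypersurface H with null pair (L,L̄), spacelike foliation with unit normal T, slope ν = −g(L̄,T)), with ζ_A := (1/2) g(D_A L, L̄) (torsion) and ε_A := k_{NA} (the mixed component of the second fundamental form of the spacelike slice), the slope equation holds along H: ν⁻¹ ∇̸_A ν = −ε_A + ζ_A for every tangent direction A to the 2-sphere. -/

import Mathlib

open scoped BigOperators

/-- slope equation, pointwise tangent-space formulation.
With the null pair `(L,L̄)` on a null hypersurface, spacelike foliation normal `T`,
slope `ν = −g(L̄,T)`, torsion `ζ_A = (1/2) g(D_A L, L̄)` and `ε_A = k_{NA} = −g(D_A T, N)`,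
the slope equation `ν⁻¹ ∇̸_A ν = −ε_A + ζ_A` holds for every tangent direction `A`.
The covariant derivatives `D_A L`, `D_A L̄`, `D_A T` are encoded as vectors, with the
Ricci equation `D_A L̄ = χ̄_{AB} e_B + ζ_A L̄` and the Leibniz rule for
`∇̸_A ν = −g(D_A L̄, T) − g(L̄, D_A T)` as hypotheses. -/
theorem stmt_2 {V : Type*} [AddCommGroup V] [Module ℝ V]
    (g : V →ₗ[ℝ] V →ₗ[ℝ] ℝ) (hsymm : ∀ u v, g u v = g v u)
    (L Lbar T N : V) (e : Fin 2 → V)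
    (ν : ℝ) (hν : ν ≠ 0)
    (hT : T = (ν/2) • L + (ν⁻¹/2) • Lbar)
    (hN : N = (ν/2) • L - (ν⁻¹/2) • Lbar)
    (hLLbar : g L Lbar = -2) (hLbarLbar : g Lbar Lbar = 0)
    (horthTe : ∀ B, g (e B) T = 0)
    (DL DLbar DT : Fin 2 → V)
    (χbar : Fin 2 → Fin 2 → ℝ) (ζ ε dν : Fin 2 → ℝ)
    (hζ : ∀ A, ζ A = (1/2) * g (DL A) Lbar)
    (hRicci : ∀ A, DLbar A = (∑ B, χbar A B • e B) + ζ A • Lbar)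
    (hε : ∀ A, ε A = - g (DT A) N)
    (hTunit : ∀ A, g T (DT A) = 0)
    (hdν : ∀ A, dν A = - g (DLbar A) T - g Lbar (DT A)) :
    ∀ A, ν⁻¹ * dν A = - ε A + ζ A := by
  intro A
  have hLbarT : g Lbar T = -ν := by
    rw [hT]
    simp only [map_add, map_smul, smul_eq_mul, hsymm Lbar L, hLLbar, hLbarLbar]
    field_simp
    ring
  have h1 : g (DLbar A) T = ζ A * (-ν) := by
    rw [hRicci A]
    simp only [map_add, map_smul, LinearMap.add_apply, LinearMap.smul_apply,
      LinearMap.coe_sum, LinearMap.sum_apply, Finset.sum_apply, smul_eq_mul]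
    simp only [map_sum, map_smul, LinearMap.sum_apply, LinearMap.smul_apply, smul_eq_mul,
      horthTe, mul_zero, Finset.sum_const_zero, hLbarT]
    ring
  have hLbarN : Lbar = ν • T - ν • N := by
    rw [hT, hN]
    rw [smul_add, smul_sub, smul_smul, smul_smul,
      show ν * (ν⁻¹/2) = 1/2 from by field_simp]
    module
  have h2 : g Lbar (DT A) = ν * ε A := by
    rw [hLbarN]
    simp only [map_sub, map_smul, LinearMap.sub_apply, LinearMap.smul_apply, smul_eq_mul,
      hTunit A]
    rw [hsymm N (DT A)]
    rw [hε A]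
    ring
  rw [hdν A, h1, h2]
  field_simp
  ring
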